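/- Let x be a decision node with remaining supply t > 1 such that f_1(x) < t and f_2(x) < t. Then the efficiency of an allocation from x is at least the efficiency of the residual allocation after the first item is sold: for every integer k with 1 ≤ k ≤ t, SW(k|x)·OPT(x + e_1) ≥ SW(k − 1 | x + e_1)·OPT(x), and for every integer k with 0 ≤ k ≤ t − 1, SW(k|x)·OPT(x + e_2) ≥ SW(k | x + e_2)·OPT(x). -/

import Mathlib

open Finset

noncomputable section

/-- The opponent of buyer `i`. -/
def other (i : Fin 2) : Fin 2 := 1 - i

/-- The standard unit vector of buyer `i`: winning one item moves `x` to `x + e i`. -/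
def e (i : Fin 2) : Fin 2 → ℕ := Pi.single i 1

/-- Remaining supply `t(x) = T - x₁ - x₂` at node `x`. -/
def supply (T : ℕ) (x : Fin 2 → ℕ) : ℕ := T - (x 0 + x 1)

/-- `x` is a decision node: `x₁ + x₂ < T`. -/
def IsDecision (T : ℕ) (x : Fin 2 → ℕ) : Prop := x 0 + x 1 < T

/-- Incremental value `v_i(k|x) = v_i(x_i + k)`. -/
def val (v : Fin 2 → ℕ → ℝ) (i : Fin 2) (k : ℕ) (x : Fin 2 → ℕ) : ℝ := v i (x i + k)

/-- Valuations are nonnegative and weakly decreasing. -/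
def Admissible (v : Fin 2 → ℕ → ℝ) : Prop := ∀ i k, 0 ≤ v i k ∧ v i (k + 1) ≤ v i k

/-- Greedy payoff `μ̄_i(k|x) = Σ_{j=1}^k v_i(j|x) - k · v_{-i}(t-k+1|x)`. -/
def gbar (T : ℕ) (v : Fin 2 → ℕ → ℝ) (i : Fin 2) (k : ℕ) (x : Fin 2 → ℕ) : ℝ :=
  (∑ j ∈ Finset.Icc 1 k, val v i j x) - (k : ℝ) * val v (other i) (supply T x - k + 1) x

/-- Greedy utility `μ_i(x) = max_{0 ≤ k ≤ t} μ̄_i(k|x)` (equal to `0` at terminal nodes). -/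
def gu (T : ℕ) (v : Fin 2 → ℕ → ℝ) (i : Fin 2) (x : Fin 2 → ℕ) : ℝ :=
  Finset.sup' (Finset.range (supply T x + 1)) Finset.nonempty_range_add_one
    (fun k => gbar T v i k x)

/-- Greedy demand `κ_i(x)`: the least `k ∈ {0,…,t}` attaining the greedy utility. -/
def gd (T : ℕ) (v : Fin 2 → ℕ → ℝ) (i : Fin 2) (x : Fin 2 → ℕ) : ℕ :=
  sInf {k | k ≤ supply T x ∧ gbar T v i k x = gu T v i x}

/-- Duopsony factor `f_i(x) = max ({k ∈ {1,…,t} : v_i(k|x) > v_{-i}(t-k+1|x)} ∪ {0})`. -/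
def df (T : ℕ) (v : Fin 2 → ℕ → ℝ) (i : Fin 2) (x : Fin 2 → ℕ) : ℕ :=
  sSup {k | 1 ≤ k ∧ k ≤ supply T x ∧
    val v (other i) (supply T x - k + 1) x < val v i k x}

/-- Baseline price `β_i(x)`. -/
def base (T : ℕ) (v : Fin 2 → ℕ → ℝ) (i : Fin 2) (x : Fin 2 → ℕ) : ℝ :=
  if df T v i x = 0 then val v i 1 x
  else val v (other i) (supply T x - gd T v i x + 1) x

/-- Threshold price `p_i(x) = v_i(1|x) + μ_i(x+e_i) - μ_i(x+e_{-i})`. -/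
def tp (T : ℕ) (v : Fin 2 → ℕ → ℝ) (i : Fin 2) (x : Fin 2 → ℕ) : ℝ :=
  val v i 1 x + gu T v i (x + e i) - gu T v i (x + e (other i))

/-- Social welfare of awarding `k` of the `t` remaining items to buyer 1. -/
def sw (T : ℕ) (v : Fin 2 → ℕ → ℝ) (k : ℕ) (x : Fin 2 → ℕ) : ℝ :=
  (∑ i ∈ Finset.Icc 1 k, val v 0 i x) + (∑ i ∈ Finset.Icc 1 (supply T x - k), val v 1 i x)

/-- Optimal social welfare `OPT(x) = max_{0 ≤ k ≤ t} SW(k|x)`. -/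
def opt (T : ℕ) (v : Fin 2 → ℕ → ℝ) (x : Fin 2 → ℕ) : ℝ :=
  Finset.sup' (Finset.range (supply T x + 1)) Finset.nonempty_range_add_one
    (fun k => sw T v k x)

lemma sum_shift (g : ℕ → ℝ) (k : ℕ) :
    ∑ i ∈ Finset.Icc 1 k, g (i + 1) = (∑ i ∈ Finset.Icc 1 (k + 1), g i) - g 1 := by
  induction k with
  | zero => simp
  | succ n ih =>
      rw [Finset.sum_Icc_succ_top (by omega : 1 ≤ n + 1),
        Finset.sum_Icc_succ_top (by omega : 1 ≤ n + 1 + 1), ih]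
      ring

lemma add_e_same (x : Fin 2 → ℕ) (i : Fin 2) : (x + e i) i = x i + 1 := by
  show x i + e i i = x i + 1
  rw [e, Pi.single_eq_same]

lemma add_e_other (x : Fin 2 → ℕ) (i j : Fin 2) (h : i ≠ j) : (x + e i) j = x j := by
  show x j + e i j = x j
  rw [e, Pi.single_eq_of_ne (Ne.symm h)]
  rfl

lemma e_sum (i : Fin 2) : e i 0 + e i 1 = 1 := by
  fin_cases i <;> rfl

lemma supply_add (T : ℕ) (x : Fin 2 → ℕ) (i : Fin 2) :
    supply T (x + e i) = supply T x - 1 := by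
  have h : (x + e i) 0 + (x + e i) 1 = x 0 + x 1 + 1 := by
    show x 0 + e i 0 + (x 1 + e i 1) = x 0 + x 1 + 1
    have := e_sum i; omega
  simp only [supply, h]
  omega

lemma le_opt (T : ℕ) (v : Fin 2 → ℕ → ℝ) (y : Fin 2 → ℕ) (k : ℕ)
    (hk : k ≤ supply T y) : sw T v k y ≤ opt T v y := by
  unfold opt
  exact Finset.le_sup' (fun k => sw T v k y) (Finset.mem_range.mpr (Nat.lt_succ_of_le hk))

lemma sw_e0 (T : ℕ) (v : Fin 2 → ℕ → ℝ) (x : Fin 2 → ℕ) (k : ℕ) :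
    sw T v k (x + e 0) = sw T v (k + 1) x - val v 0 1 x := by
  have hs := supply_add T x 0
  have hle : ∀ i : ℕ, val v 0 i (x + e 0) = val v 0 (i + 1) x := by
    intro i
    show v 0 ((x + e 0) 0 + i) = v 0 (x 0 + (i + 1))
    rw [add_e_same x 0]; congr 1; omega
  have hre : ∀ i : ℕ, val v 1 i (x + e 0) = val v 1 i x := by
    intro i
    show v 1 ((x + e 0) 1 + i) = v 1 (x 1 + i)
    rw [add_e_other x 0 1 (by decide)]
  simp only [sw, hs]
  rw [Finset.sum_congr rfl (fun i _ => hle i), Finset.sum_congr rfl (fun i _ => hre i)]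
  rw [sum_shift (fun i => val v 0 i x) k]
  have h' : supply T x - 1 - k = supply T x - (k + 1) := by omega
  rw [h']; ring

lemma sw_e1 (T : ℕ) (v : Fin 2 → ℕ → ℝ) (x : Fin 2 → ℕ) (k : ℕ)
    (hk : k + 1 ≤ supply T x) :
    sw T v k (x + e 1) = sw T v k x - val v 1 1 x := by
  have hs := supply_add T x 1
  have hle : ∀ i : ℕ, val v 0 i (x + e 1) = val v 0 i x := by
    intro i
    show v 0 ((x + e 1) 0 + i) = v 0 (x 0 + i)
    rw [add_e_other x 1 0 (by decide)]
  have hre : ∀ i : ℕ, val v 1 i (x + e 1) = val v 1 (i + 1) x := by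
    intro i
    show v 1 ((x + e 1) 1 + i) = v 1 (x 1 + (i + 1))
    rw [add_e_same x 1]; congr 1; omega
  simp only [sw, hs]
  rw [Finset.sum_congr rfl (fun i _ => hle i), Finset.sum_congr rfl (fun i _ => hre i)]
  rw [sum_shift (fun i => val v 1 i x) (supply T x - 1 - k)]
  have h' : supply T x - 1 - k + 1 = supply T x - k := by omega
  rw [h']; ring

lemma df_lt_imp (T : ℕ) (v : Fin 2 → ℕ → ℝ) (x : Fin 2 → ℕ) (i : Fin 2)
    (h : df T v i x < supply T x) :
    val v i (supply T x) x ≤ val v (other i) 1 x := by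
  by_contra h'
  push_neg at h'
  have ht : 1 ≤ supply T x := by omega
  have hmem : supply T x ∈ {k | 1 ≤ k ∧ k ≤ supply T x ∧
      val v (other i) (supply T x - k + 1) x < val v i k x} := by
    refine ⟨ht, le_refl _, ?_⟩
    have h'' : supply T x - supply T x + 1 = 1 := by omega
    rw [h'']; exact h'
  have hbdd : BddAbove {k | 1 ≤ k ∧ k ≤ supply T x ∧
      val v (other i) (supply T x - k + 1) x < val v i k x} :=
    ⟨supply T x, fun k hk => hk.2.1⟩
  have := le_csSup hbdd hmem
  simp only [df] at h
  omega
/-- If neither buyer has monopsony power then the efficiency of an allocation from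
`x` is at least the efficiency of the residual allocation after the first sale. -/
theorem stmt14 (T : ℕ) (v : Fin 2 → ℕ → ℝ) (hv : Admissible v)
    (x : Fin 2 → ℕ) (hx : IsDecision T x) (ht : 1 < supply T x)
    (h1 : df T v 0 x < supply T x) (h2 : df T v 1 x < supply T x) :
    (∀ k, 1 ≤ k → k ≤ supply T x →
      sw T v (k - 1) (x + e 0) * opt T v x ≤ sw T v k x * opt T v (x + e 0)) ∧
    (∀ k, k ≤ supply T x - 1 →
      sw T v k (x + e 1) * opt T v x ≤ sw T v k x * opt T v (x + e 1)) := by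

  set t := supply T x with htdef
  have hs0 : supply T (x + e 0) = t - 1 := supply_add T x 0
  have hs1 : supply T (x + e 1) = t - 1 := supply_add T x 1
  have ha : (0:ℝ) ≤ val v 0 1 x := (hv 0 _).1
  have hb : (0:ℝ) ≤ val v 1 1 x := (hv 1 _).1
  have hother1 : other 1 = (0 : Fin 2) := rfl
  have hother0 : other 0 = (1 : Fin 2) := rfl
  have h01 : sw T v 0 x ≤ sw T v 1 x := by
    have hkey : val v 1 t x ≤ val v 0 1 x := by
      have := df_lt_imp T v x 1 h2; rwa [hother1] at this
    simp only [sw, Nat.sub_zero]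
    have hsplit : ∑ i ∈ Finset.Icc 1 t, val v 1 i x
        = (∑ i ∈ Finset.Icc 1 (t - 1), val v 1 i x) + val v 1 t x := by
      have h' : t - 1 + 1 = t := by omega
      rw [← h', Finset.sum_Icc_succ_top (by omega : 1 ≤ t - 1 + 1)]
      rw [h']
    rw [hsplit]
    simp [Finset.Icc_self]
    linarith
  have htop : sw T v t x ≤ sw T v (t - 1) x := by
    have hkey : val v 0 t x ≤ val v 1 1 x := by
      have := df_lt_imp T v x 0 h1; rwa [hother0] at this
    simp only [sw, Nat.sub_self]
    have h1' : t - (t - 1) = 1 := by omega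
    rw [h1']
    have hsplit : ∑ i ∈ Finset.Icc 1 t, val v 0 i x
        = (∑ i ∈ Finset.Icc 1 (t - 1), val v 0 i x) + val v 0 t x := by
      have h' : t - 1 + 1 = t := by omega
      rw [← h', Finset.sum_Icc_succ_top (by omega : 1 ≤ t - 1 + 1)]
      rw [h']
    rw [hsplit]
    simp [Finset.Icc_self, ← htdef]
    linarith
  have hopt0 : opt T v (x + e 0) = opt T v x - val v 0 1 x := by
    apply le_antisymm
    · apply Finset.sup'_le
      intro k hk
      rw [sw_e0]
      have : sw T v (k + 1) x ≤ opt T v x := by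
        apply le_opt
        rw [Finset.mem_range, hs0] at hk; omega
      linarith
    · rw [sub_le_iff_le_add]
      apply Finset.sup'_le
      intro k hk
      rw [Finset.mem_range] at hk
      rcases Nat.eq_zero_or_pos k with rfl | hkpos
      · calc sw T v 0 x ≤ sw T v 1 x := h01
          _ = sw T v 0 (x + e 0) + val v 0 1 x := by rw [sw_e0]; ring
          _ ≤ _ := by
              have := le_opt T v (x + e 0) 0 (by omega)
              linarith
      · have hk1 : k - 1 + 1 = k := by omega
        have heq : sw T v k x = sw T v (k - 1) (x + e 0) + val v 0 1 x := by
          rw [sw_e0, hk1]; ring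
        rw [heq]
        have := le_opt T v (x + e 0) (k - 1) (by rw [hs0]; omega)
        linarith
  have hopt1 : opt T v (x + e 1) = opt T v x - val v 1 1 x := by
    apply le_antisymm
    · apply Finset.sup'_le
      intro k hk
      rw [Finset.mem_range, hs1] at hk
      rw [sw_e1 T v x k (by omega)]
      have := le_opt T v x k (by omega)
      linarith
    · rw [sub_le_iff_le_add]
      apply Finset.sup'_le
      intro k hk
      rw [Finset.mem_range] at hk
      rcases Nat.lt_or_ge k t with hkt | hkt
      · have heq : sw T v k x = sw T v k (x + e 1) + val v 1 1 x := by
          rw [sw_e1 T v x k (by omega)]; ring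
        rw [heq]
        have := le_opt T v (x + e 1) k (by rw [hs1]; omega)
        linarith
      · have hkt' : k = t := by omega
        subst hkt'
        calc sw T v t x ≤ sw T v (t - 1) x := htop
          _ = sw T v (t - 1) (x + e 1) + val v 1 1 x := by
              rw [sw_e1 T v x (t - 1) (by omega)]; ring
          _ ≤ _ := by
              have := le_opt T v (x + e 1) (t - 1) (by rw [hs1])
              linarith
  constructor
  · intro k hk1 hkt
    have hkk : k - 1 + 1 = k := by omega
    have hsw : sw T v (k - 1) (x + e 0) = sw T v k x - val v 0 1 x := by
      rw [sw_e0, hkk]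
    have hS : sw T v k x ≤ opt T v x := le_opt T v x k hkt
    rw [hsw, hopt0]
    nlinarith
  · intro k hk
    have hsw : sw T v k (x + e 1) = sw T v k x - val v 1 1 x :=
      sw_e1 T v x k (by omega)
    have hS : sw T v k x ≤ opt T v x := le_opt T v x k (by omega)
    rw [hsw, hopt1]
    nlinarith
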